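/- For all integers l and j with 2 ≤ l ≤ j, one has χ_{l,j} = σ_{l,j}. -/

import Mathlib

open Finset

/-- The coefficient `σ_{l,j}` from the paper (there written `σ_{l,i+1}` with `j = i+1`):
`σ_{l,j} = (-1)^{j-1} Σ_{p=0}^{j-2} (-1)^{p+1} Σ_{q=0}^{p+1} (-1)^q C(j,q)(p+1-q)^{l-1}`. -/
def sigmaCoeff (l j : ℕ) : ℚ :=
  (-1) ^ (j - 1) * ∑ p ∈ Finset.range (j - 1), (-1 : ℚ) ^ (p + 1) *
    ∑ q ∈ Finset.range (p + 2), (-1 : ℚ) ^ q * (j.choose q : ℚ) * ((p + 1 - q : ℕ) : ℚ) ^ (l - 1)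

/-- The coefficient `χ_{l,j}` from the paper (there written `χ_{l,i+1}` with `j = i+1`):
`χ_{l,j} = (-1)^{j-l} Σ_{k=1}^{j-1} ((2^{j-1}-2^{j-1-k})/(k+1)) Σ_{m=0}^{k+1} (-1)^m C(k+1,m) m^l`. -/
def chiCoeff (l j : ℕ) : ℚ :=
  (-1) ^ (j - l) * ∑ k ∈ Finset.Icc 1 (j - 1),
    ((2 ^ (j - 1) - 2 ^ (j - 1 - k) : ℚ) / ((k : ℚ) + 1)) *
      ∑ m ∈ Finset.range (k + 2), (-1 : ℚ) ^ m * ((k + 1).choose m : ℚ) * (m : ℚ) ^ l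

/-! ### Auxiliary definitions -/

/-- `Tm m k = Σ_{r=0}^{k} (-1)^r C(k,r) r^m`, the `k`-th alternating difference of `x^m`. -/
def Tm (m k : ℕ) : ℚ :=
  ∑ r ∈ Finset.range (k + 1), (-1 : ℚ) ^ r * (k.choose r : ℚ) * (r : ℚ) ^ m

/-- `Tp m k = Σ_{s=0}^{k} (-1)^s C(k,s) (s+1)^m`. -/
def Tp (m k : ℕ) : ℚ :=
  ∑ s ∈ Finset.range (k + 1), (-1 : ℚ) ^ s * (k.choose s : ℚ) * ((s : ℚ) + 1) ^ m

/-- The inner sum of `sigmaCoeff`. -/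
def fN (m j n : ℕ) : ℚ :=
  ∑ q ∈ Finset.range (n + 1), (-1 : ℚ) ^ q * (j.choose q : ℚ) * ((n - q : ℕ) : ℚ) ^ m

/-- The alternating sum of the `fN`'s. -/
def Lm (m j : ℕ) : ℚ := ∑ i ∈ Finset.range (j - 1), (-1 : ℚ) ^ (i + 1) * fN m j (i + 1)

/-- The weighted sum of the `Tm`'s. -/
def Rm (m j : ℕ) : ℚ := ∑ i ∈ Finset.range (j - 1), (2 : ℚ) ^ (j - 2 - i) * Tm m (i + 1)

lemma neg_one_pow_nat_sub (a b : ℕ) (h : b ≤ a) :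
    ((-1 : ℚ)) ^ (a - b) = (-1) ^ a * (-1) ^ b := by
  have h1 : ((-1 : ℚ)) ^ (a - b) * (-1) ^ b = (-1) ^ a := by
    rw [← pow_add]; congr 1; omega
  have h2 : ((-1 : ℚ)) ^ b * (-1) ^ b = 1 := by
    rw [← pow_add]; exact Even.neg_one_pow ⟨b, rfl⟩
  calc ((-1 : ℚ)) ^ (a - b) = ((-1 : ℚ)) ^ (a - b) * ((-1) ^ b * (-1) ^ b) := by rw [h2, mul_one]
    _ = (((-1 : ℚ)) ^ (a - b) * (-1) ^ b) * (-1) ^ b := by ring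
    _ = (-1) ^ a * (-1) ^ b := by rw [h1]

/-- The `n`-th alternating difference of a monomial of degree `m < n` vanishes. -/
lemma diff_zero : ∀ n m : ℕ, m < n → ∀ x : ℚ,
    ∑ q ∈ Finset.range (n + 1), (-1 : ℚ) ^ q * (n.choose q : ℚ) * (x - q) ^ m = 0 := by
  intro n
  induction n with
  | zero => intro m hm; omega
  | succ n ih =>
    intro m hm x
    have key : ∑ q ∈ Finset.range (n + 2), (-1 : ℚ) ^ q * ((n+1).choose q : ℚ) * (x - q) ^ m
        = ∑ q ∈ Finset.range (n + 1), (-1 : ℚ) ^ q * (n.choose q : ℚ) *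
            ((x - q) ^ m - (x - 1 - q) ^ m) := by
      have hA : ∑ q ∈ Finset.range (n + 1), (-1 : ℚ) ^ q * (n.choose q : ℚ) * (x - q) ^ m
          = (∑ q ∈ Finset.range (n + 1),
              (-1 : ℚ) ^ (q+1) * (n.choose (q+1) : ℚ) * (x - ((q+1 : ℕ) : ℚ)) ^ m) + x ^ m := by
        rw [Finset.sum_range_succ' (fun q => (-1 : ℚ) ^ q * (n.choose q : ℚ) * (x - q) ^ m) n]
        have hext : (∑ q ∈ Finset.range n,
            (-1 : ℚ) ^ (q+1) * (n.choose (q+1) : ℚ) * (x - ((q+1 : ℕ) : ℚ)) ^ m)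
            = ∑ q ∈ Finset.range (n + 1),
              (-1 : ℚ) ^ (q+1) * (n.choose (q+1) : ℚ) * (x - ((q+1 : ℕ) : ℚ)) ^ m := by
          rw [Finset.sum_range_succ]
          simp [Nat.choose_succ_self]
        rw [hext]
        simp [Nat.choose_zero_right]
      have hms : ∑ q ∈ Finset.range (n + 1), (-1 : ℚ) ^ q * (n.choose q : ℚ) *
            ((x - q) ^ m - (x - 1 - q) ^ m)
          = (∑ q ∈ Finset.range (n + 1), (-1 : ℚ) ^ q * (n.choose q : ℚ) * (x - q) ^ m)
            - ∑ q ∈ Finset.range (n + 1), (-1 : ℚ) ^ q * (n.choose q : ℚ) * (x - 1 - q) ^ m := by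
        rw [← Finset.sum_sub_distrib]
        exact Finset.sum_congr rfl fun q _ => by ring
      rw [hms, hA]
      rw [Finset.sum_range_succ' (fun q => (-1 : ℚ) ^ q * ((n+1).choose q : ℚ) * (x - q) ^ m)
        (n+1)]
      have hsplit : ∀ q ∈ Finset.range (n + 1),
          (-1 : ℚ) ^ (q+1) * (((n+1).choose (q+1) : ℕ) : ℚ) * (x - ((q+1 : ℕ) : ℚ)) ^ m
          = (-1 : ℚ) ^ (q+1) * (n.choose q : ℚ) * (x - ((q+1 : ℕ) : ℚ)) ^ m
            + (-1 : ℚ) ^ (q+1) * (n.choose (q+1) : ℚ) * (x - ((q+1 : ℕ) : ℚ)) ^ m := by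
        intro q _
        rw [Nat.choose_succ_succ]
        push_cast
        ring
      rw [Finset.sum_congr rfl hsplit, Finset.sum_add_distrib]
      have hshift : ∀ q ∈ Finset.range (n+1),
          (-1 : ℚ) ^ (q+1) * (n.choose q : ℚ) * (x - ((q+1 : ℕ) : ℚ)) ^ m
          = -((-1 : ℚ) ^ q * (n.choose q : ℚ) * (x - 1 - q) ^ m) := by
        intro q _
        have hc : x - ((q+1 : ℕ) : ℚ) = x - 1 - q := by push_cast; ring
        rw [hc]; ring
      -- end hshift
      rw [Finset.sum_congr rfl hshift, Finset.sum_neg_distrib]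
      simp only [Nat.choose_zero_right, Nat.cast_zero, Nat.cast_one, pow_zero, one_mul, sub_zero]
      ring
    rw [key]
    have hbr : ∀ q ∈ Finset.range (n+1),
        (-1 : ℚ) ^ q * (n.choose q : ℚ) * ((x - q) ^ m - (x - 1 - q) ^ m)
        = ∑ i ∈ Finset.range m, -((-1 : ℚ) ^ (i + m) * (m.choose i : ℚ))
            * ((-1 : ℚ) ^ q * (n.choose q : ℚ) * (x - q) ^ i) := by
      intro q _
      have hy : (x - 1 - (q : ℚ)) = (x - q) - 1 := by ring
      rw [hy, sub_pow (x - (q:ℚ)) 1 m, Finset.sum_range_succ]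
      simp only [one_pow, Nat.choose_self, Nat.cast_one, Nat.sub_self, pow_zero]
      have h2m : (-1 : ℚ) ^ (m + m) = 1 := Even.neg_one_pow ⟨m, rfl⟩
      rw [h2m]
      have hRS : ∑ i ∈ Finset.range m,
            -((-1 : ℚ) ^ (i + m) * (m.choose i : ℚ))
              * ((-1 : ℚ) ^ q * (n.choose q : ℚ) * (x - q) ^ i)
          = (-1 : ℚ) ^ q * (n.choose q : ℚ)
            * -(∑ i ∈ Finset.range m, (-1 : ℚ) ^ (i + m) * (x - (q:ℚ)) ^ i * 1 * (m.choose i : ℚ)) := by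
        rw [← Finset.sum_neg_distrib, Finset.mul_sum]
        exact Finset.sum_congr rfl fun i _ => by ring
      rw [hRS]
      ring
    rw [Finset.sum_congr rfl hbr]
    rw [Finset.sum_comm]
    apply Finset.sum_eq_zero
    intro i hi
    rw [← Finset.mul_sum]
    rw [ih i (by simp at hi; omega) x]
    ring

/-- `Tm` as a reflected difference. -/
lemma Tm_eq_diff (m k : ℕ) :
    Tm m k = (-1 : ℚ) ^ k *
      ∑ q ∈ Finset.range (k + 1), (-1 : ℚ) ^ q * (k.choose q : ℚ) * ((k : ℚ) - q) ^ m := by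
  unfold Tm
  rw [← Finset.sum_range_reflect (fun r => (-1 : ℚ) ^ r * (k.choose r : ℚ) * (r : ℚ) ^ m) (k+1)]
  rw [Finset.mul_sum]
  apply Finset.sum_congr rfl
  intro q hq
  simp only [Finset.mem_range] at hq
  have hq' : q ≤ k := by omega
  have h1 : k + 1 - 1 - q = k - q := by omega
  rw [h1]
  rw [Nat.choose_symm hq']
  rw [neg_one_pow_nat_sub k q hq']
  have h2 : (((k - q : ℕ) : ℚ)) = (k : ℚ) - q := by
    rw [Nat.cast_sub hq']
  rw [h2]
  ring

lemma Tm_zero (m k : ℕ) (h : m < k) : Tm m k = 0 := by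
  rw [Tm_eq_diff, diff_zero k m h ((k : ℚ)), mul_zero]

lemma Tm_one (m : ℕ) (hm : 1 ≤ m) : Tm m 1 = -1 := by
  unfold Tm
  rw [show (1:ℕ)+1 = 2 by rfl, Finset.sum_range_succ, Finset.sum_range_succ,
    Finset.sum_range_zero]
  simp [zero_pow (by omega : m ≠ 0)]

/-- Pascal recurrence for `Tm`. -/
lemma Tm_pascal (m n : ℕ) : Tm m (n + 1) = Tm m n - Tp m n := by
  unfold Tm Tp
  rw [Finset.sum_range_succ' (fun r => (-1 : ℚ) ^ r * ((n+1).choose r : ℚ) * (r : ℚ) ^ m) (n+1)]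
  rw [Finset.sum_range_succ' (fun r => (-1 : ℚ) ^ r * (n.choose r : ℚ) * (r : ℚ) ^ m) n]
  have hext : (∑ s ∈ Finset.range n, (-1 : ℚ) ^ (s+1) * (n.choose (s+1) : ℚ) * ((s:ℚ)+1) ^ m)
      = ∑ s ∈ Finset.range (n+1), (-1 : ℚ) ^ (s+1) * (n.choose (s+1) : ℚ) * ((s:ℚ)+1) ^ m := by
    rw [Finset.sum_range_succ]; simp [Nat.choose_succ_self]
  have hsplit : ∀ s ∈ Finset.range (n+1),
      (-1 : ℚ) ^ (s+1) * (((n+1).choose (s+1) : ℕ) : ℚ) * (((s+1 : ℕ)):ℚ) ^ m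
      = (-1 : ℚ) ^ (s+1) * (n.choose s : ℚ) * ((s:ℚ)+1) ^ m
        + (-1 : ℚ) ^ (s+1) * (n.choose (s+1) : ℚ) * ((s:ℚ)+1) ^ m := by
    intro s _
    rw [Nat.choose_succ_succ]
    push_cast
    ring
  rw [Finset.sum_congr rfl hsplit, Finset.sum_add_distrib]
  push_cast
  rw [hext]
  have : ∀ s ∈ Finset.range (n+1),
      (-1 : ℚ) ^ (s+1) * (n.choose s : ℚ) * ((s:ℚ)+1) ^ m
      = -((-1 : ℚ) ^ s * (n.choose s : ℚ) * ((s:ℚ)+1) ^ m) := by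
    intro s _; ring
  rw [Finset.sum_congr rfl this, Finset.sum_neg_distrib]
  simp only [Nat.choose_zero_right, Nat.cast_one]
  ring

/-- Absorption: `Tm (m+1) (n+1) = -(n+1) * Tp m n`. -/
lemma Tm_absorb (m n : ℕ) : Tm (m + 1) (n + 1) = -((n : ℚ) + 1) * Tp m n := by
  unfold Tm Tp
  rw [Finset.sum_range_succ'
    (fun r => (-1 : ℚ) ^ r * ((n+1).choose r : ℚ) * (r : ℚ) ^ (m+1)) (n+1)]
  simp only [Nat.cast_zero, pow_zero, zero_pow (Nat.succ_ne_zero m), mul_zero, add_zero,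
    Nat.cast_ofNat]
  rw [Finset.mul_sum]
  apply Finset.sum_congr rfl
  intro s _
  have hch : ((n+1 : ℕ) : ℚ) * (n.choose s : ℚ) = ((n+1).choose (s+1) : ℚ) * ((s+1 : ℕ) : ℚ) := by
    have := Nat.add_one_mul_choose_eq n s
    exact_mod_cast congrArg (Nat.cast : ℕ → ℚ) this
  push_cast at hch ⊢
  calc (-1 : ℚ) ^ (s+1) * ((n+1).choose (s+1) : ℚ) * ((s:ℚ)+1) ^ (m+1)
      = (((n+1).choose (s+1) : ℚ) * ((s:ℚ)+1)) * ((-1 : ℚ) ^ (s+1) * ((s:ℚ)+1) ^ m) := by ring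
    _ = (((n:ℚ)+1) * (n.choose s : ℚ)) * ((-1 : ℚ) ^ (s+1) * ((s:ℚ)+1) ^ m) := by rw [← hch]
    _ = -((n:ℚ)+1) * ((-1 : ℚ) ^ s * (n.choose s : ℚ) * ((s:ℚ)+1) ^ m) := by ring

/-- The key recurrence `Tm (m+1) (n+1) = (n+1)(Tm m (n+1) - Tm m n)`. -/
lemma Tm_rec (m n : ℕ) : Tm (m + 1) (n + 1) = ((n : ℚ) + 1) * (Tm m (n + 1) - Tm m n) := by
  rw [Tm_absorb, Tm_pascal]
  ring

/-- Cast form of `fN`. -/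
lemma fN_cast (m j n : ℕ) :
    fN m j n = ∑ q ∈ Finset.range (n + 1), (-1 : ℚ) ^ q * (j.choose q : ℚ) * ((n : ℚ) - q) ^ m := by
  unfold fN
  apply Finset.sum_congr rfl
  intro q hq
  simp only [Finset.mem_range] at hq
  rw [Nat.cast_sub (by omega : q ≤ n)]

lemma fN_zero (m j : ℕ) (hm : 1 ≤ m) : fN m j 0 = 0 := by
  unfold fN
  simp [zero_pow (by omega : m ≠ 0)]

/-- Reflection: `fN m j j = (-1)^j * Tm m j`. -/
lemma fN_top (m j : ℕ) : fN m j j = (-1 : ℚ) ^ j * Tm m j := by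
  unfold fN Tm
  rw [← Finset.sum_range_reflect
    (fun r => (-1 : ℚ) ^ r * (j.choose r : ℚ) * (r : ℚ) ^ m) (j+1)]
  rw [Finset.mul_sum]
  apply Finset.sum_congr rfl
  intro q hq
  simp only [Finset.mem_range] at hq
  have hq' : q ≤ j := by omega
  have h1 : j + 1 - 1 - q = j - q := by omega
  rw [h1, Nat.choose_symm hq', neg_one_pow_nat_sub j q hq']
  have hsq : (-1 : ℚ) ^ j * (-1 : ℚ) ^ j = 1 := by
    rw [← pow_add]; exact Even.neg_one_pow ⟨j, rfl⟩
  linear_combination (-((-1 : ℚ) ^ q * (j.choose q : ℚ) * ((j - q : ℕ) : ℚ) ^ m)) * hsq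

/-- Pascal recurrence for `fN` in `j`. -/
lemma fN_succ (m j n : ℕ) : fN m (j + 1) (n + 1) = fN m j (n + 1) - fN m j n := by
  unfold fN
  rw [Finset.sum_range_succ'
    (fun q => (-1 : ℚ) ^ q * ((j+1).choose q : ℚ) * (((n+1) - q : ℕ) : ℚ) ^ m) (n+1)]
  rw [Finset.sum_range_succ'
    (fun q => (-1 : ℚ) ^ q * (j.choose q : ℚ) * (((n+1) - q : ℕ) : ℚ) ^ m) (n+1)]
  have hidx : ∀ q : ℕ, (n + 1 - (q + 1) : ℕ) = (n - q : ℕ) := by intro q; omega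
  have hsplit : ∀ q ∈ Finset.range (n+1),
      (-1 : ℚ) ^ (q+1) * (((j+1).choose (q+1) : ℕ) : ℚ) * (((n+1) - (q+1) : ℕ) : ℚ) ^ m
      = (-1 : ℚ) ^ (q+1) * (j.choose q : ℚ) * ((n - q : ℕ) : ℚ) ^ m
        + (-1 : ℚ) ^ (q+1) * (j.choose (q+1) : ℚ) * (((n+1) - (q+1) : ℕ) : ℚ) ^ m := by
    intro q _
    rw [Nat.choose_succ_succ, hidx q]
    push_cast
    ring
  rw [Finset.sum_congr rfl hsplit, Finset.sum_add_distrib]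
  have hneg : ∀ q ∈ Finset.range (n+1),
      (-1 : ℚ) ^ (q+1) * (j.choose q : ℚ) * ((n - q : ℕ) : ℚ) ^ m
      = -((-1 : ℚ) ^ q * (j.choose q : ℚ) * ((n - q : ℕ) : ℚ) ^ m) := by
    intro q _; ring
  rw [Finset.sum_congr rfl hneg, Finset.sum_neg_distrib]
  simp only [Nat.choose_zero_right, Nat.cast_one, pow_zero, one_mul, Nat.sub_zero]
  ring

/-- Symmetry of the Eulerian-number-like values. -/
lemma fN_symm (m n : ℕ) (hm : 1 ≤ m) (hn : n ≤ m + 1) :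
    fN m (m + 1) n = fN m (m + 1) (m + 1 - n) := by
  -- full difference vanishes
  have hfull : ∑ q ∈ Finset.range (m + 2),
      (-1 : ℚ) ^ q * ((m+1).choose q : ℚ) * ((n : ℚ) - q) ^ m = 0 :=
    diff_zero (m+1) m (by omega) ((n : ℚ))
  -- split the full sum at n+1
  have hsplit : ∑ q ∈ Finset.range (m + 2),
      (-1 : ℚ) ^ q * ((m+1).choose q : ℚ) * ((n : ℚ) - q) ^ m
      = fN m (m+1) n + ∑ q ∈ Finset.Ico (n+1) (m+2),
          (-1 : ℚ) ^ q * ((m+1).choose q : ℚ) * ((n : ℚ) - q) ^ m := by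
    rw [fN_cast]
    rw [Finset.range_eq_Ico, ← Finset.sum_Ico_consecutive _ (by omega : 0 ≤ n+1)
      (by omega : n+1 ≤ m+2)]
    rw [Finset.range_eq_Ico]
  have hmain : fN m (m+1) n = -∑ q ∈ Finset.Ico (n+1) (m+2),
      (-1 : ℚ) ^ q * ((m+1).choose q : ℚ) * ((n : ℚ) - q) ^ m := by
    rw [hsplit] at hfull; linarith
  -- rewrite the Ico sum as a range sum and reflect
  rw [hmain, Finset.sum_Ico_eq_sum_range]
  have hlen : m + 2 - (n + 1) = m + 1 - n := by omega
  rw [hlen]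
  rw [← Finset.sum_range_reflect
    (fun i => (-1 : ℚ) ^ (n+1+i) * ((m+1).choose (n+1+i) : ℚ)
      * ((n : ℚ) - ((n+1+i : ℕ) : ℚ)) ^ m) (m+1-n)]
  -- rewrite the target
  have htar : fN m (m+1) (m+1-n) = ∑ i ∈ Finset.range (m+1-n),
      (-1 : ℚ) ^ i * ((m+1).choose i : ℚ) * (((m+1-n : ℕ) : ℚ) - i) ^ m := by
    rw [fN_cast]
    rw [Finset.sum_range_succ]
    simp [zero_pow (by omega : m ≠ 0)]
  rw [htar, ← Finset.sum_neg_distrib]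
  apply Finset.sum_congr rfl
  intro i hi
  simp only [Finset.mem_range] at hi
  have h1 : n + 1 + (m + 1 - n - 1 - i) = m + 1 - i := by omega
  rw [h1]
  have hile : i ≤ m + 1 := by omega
  rw [Nat.choose_symm hile]
  have e1 : ((m + 1 - i : ℕ) : ℚ) = (m : ℚ) + 1 - i := by
    rw [Nat.cast_sub hile]; push_cast; ring
  have e2 : ((m + 1 - n : ℕ) : ℚ) = (m : ℚ) + 1 - n := by
    rw [Nat.cast_sub hn]; push_cast; ring
  rw [e1, e2, neg_one_pow_nat_sub (m+1) i hile]
  have e3 : ((n : ℚ) - ((m : ℚ) + 1 - i)) = -(((m : ℚ) + 1 - n) - i) := by ring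
  rw [e3, show (-((m:ℚ) + 1 - n - i)) ^ m = (-1) ^ m * ((m:ℚ) + 1 - n - i) ^ m
    from neg_pow _ m]
  have hsq : (-1 : ℚ) ^ m * (-1 : ℚ) ^ m = 1 := by
    rw [← pow_add, ← two_mul, pow_mul]; norm_num
  have e4 : (-1:ℚ) ^ (m+1) = (-1) ^ m * (-1) := by rw [pow_succ]
  rw [e4]
  linear_combination (-1 : ℚ) ^ i * (((m+1).choose i : ℕ) : ℚ)
    * (((m : ℚ) + 1 - n) - i) ^ m * hsq

/-- Recurrence for `Lm`. -/
lemma Lm_rec (m j' : ℕ) (hm : 1 ≤ m) :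
    Lm m (j' + 2) = 2 * Lm m (j' + 1) + Tm m (j' + 1) := by
  unfold Lm
  rw [show j' + 2 - 1 = j' + 1 by omega, show j' + 1 - 1 = j' by omega]
  have hstep : ∀ i ∈ Finset.range (j' + 1),
      (-1 : ℚ) ^ (i+1) * fN m (j' + 2) (i + 1)
      = (-1 : ℚ) ^ (i+1) * fN m (j' + 1) (i + 1) - (-1 : ℚ) ^ (i+1) * fN m (j' + 1) i := by
    intro i _
    rw [show j' + 2 = (j' + 1) + 1 by omega, fN_succ]
    ring
  rw [Finset.sum_congr rfl hstep, Finset.sum_sub_distrib]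
  rw [Finset.sum_range_succ (fun i => (-1 : ℚ) ^ (i+1) * fN m (j' + 1) (i + 1)) j']
  rw [Finset.sum_range_succ' (fun i => (-1 : ℚ) ^ (i+1) * fN m (j' + 1) i) j']
  rw [fN_zero m _ hm, fN_top m (j' + 1)]
  have hww : ∀ i ∈ Finset.range j',
      (-1 : ℚ) ^ (i+1+1) * fN m (j' + 1) (i + 1)
      = -((-1 : ℚ) ^ (i+1) * fN m (j' + 1) (i + 1)) := by
    intro i _; ring
  rw [Finset.sum_congr rfl hww, Finset.sum_neg_distrib]
  have hsq : (-1 : ℚ) ^ (j' + 1) * (-1 : ℚ) ^ (j' + 1) = 1 := by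
    rw [← pow_add, ← two_mul, pow_mul]; norm_num
  linear_combination Tm m (j' + 1) * hsq

/-- Recurrence for `Rm`. -/
lemma Rm_rec (m j' : ℕ) :
    Rm m (j' + 2) = 2 * Rm m (j' + 1) + Tm m (j' + 1) := by
  unfold Rm
  rw [show j' + 2 - 1 = j' + 1 by omega, show j' + 1 - 1 = j' by omega]
  rw [Finset.sum_range_succ]
  rw [show j' + 2 - 2 - j' = 0 by omega, pow_zero, one_mul]
  have hpow : ∀ i ∈ Finset.range j',
      (2 : ℚ) ^ (j' + 2 - 2 - i) * Tm m (i + 1)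
      = 2 * ((2 : ℚ) ^ (j' + 1 - 2 - i) * Tm m (i + 1)) := by
    intro i hi
    simp only [Finset.mem_range] at hi
    rw [show j' + 2 - 2 - i = (j' + 1 - 2 - i) + 1 by omega, pow_succ]
    ring
  rw [Finset.sum_congr rfl hpow, ← Finset.mul_sum]

lemma LeqR (m : ℕ) (hm : 1 ≤ m) : ∀ j, Lm m j = Rm m j := by
  intro j
  induction j with
  | zero => simp [Lm, Rm]
  | succ j ih =>
    cases j with
    | zero => simp [Lm, Rm]
    | succ j' => rw [Lm_rec m j' hm, Rm_rec m j', ih]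

lemma Lm_even_zero (m : ℕ) (hm : 1 ≤ m) (he : Even m) : Lm m (m + 1) = 0 := by
  have hrefl : Lm m (m + 1) = -Lm m (m + 1) := by
    unfold Lm
    rw [show m + 1 - 1 = m by omega]
    nth_rewrite 1 [← Finset.sum_range_reflect (fun i => (-1 : ℚ) ^ (i+1) * fN m (m+1) (i+1)) m]
    rw [← Finset.sum_neg_distrib]
    apply Finset.sum_congr rfl
    intro i hi
    simp only [Finset.mem_range] at hi
    have h1 : m - 1 - i + 1 = m - i := by omega
    rw [h1]
    have h2 : fN m (m + 1) (m - i) = fN m (m + 1) (i + 1) := by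
      rw [fN_symm m (m - i) hm (by omega)]
      congr 1
      omega
    rw [h2, neg_one_pow_nat_sub m i (by omega : i ≤ m), he.neg_one_pow, one_mul, pow_succ]
    ring
  linarith

lemma Lm_eq (m : ℕ) (hm : 1 ≤ m) : ∀ j, m + 1 ≤ j → Lm m j = (-1 : ℚ) ^ (m + 1) * Rm m j := by
  intro j hj
  induction j, hj using Nat.le_induction with
  | base =>
    rcases Nat.even_or_odd m with he | ho
    · rw [Lm_even_zero m hm he, ← LeqR m hm (m + 1), Lm_even_zero m hm he, mul_zero]
    · rw [(ho.add_one).neg_one_pow, one_mul, LeqR m hm]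
  | succ j hj ih =>
    obtain ⟨j', rfl⟩ : ∃ j', j = j' + 1 := ⟨j - 1, by omega⟩
    rw [Lm_rec m j' hm, Rm_rec m j', Tm_zero m (j' + 1) (by omega), ih]
    ring

/-- Inner sum of `chiCoeff` is `Tm`. -/
lemma chi_inner (m k : ℕ) :
    (∑ x ∈ Finset.range (k + 2), (-1 : ℚ) ^ x * ((k + 1).choose x : ℚ) * (x : ℚ) ^ (m + 1))
      = Tm (m + 1) (k + 1) := rfl

/-- Abel summation step. -/
lemma abel_step (m j : ℕ) (hm : 1 ≤ m) (hj : m + 1 ≤ j) (hj2 : 2 ≤ j) :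
    ∑ i ∈ Finset.range (j - 1),
        ((2 : ℚ) ^ (j - 1) - 2 ^ (j - 2 - i)) * (Tm m (i + 2) - Tm m (i + 1))
      = -Rm m j := by
  obtain ⟨j'', rfl⟩ : ∃ j'', j = j'' + 2 := ⟨j - 2, by omega⟩
  unfold Rm
  simp only [show j'' + 2 - 1 = j'' + 1 from by omega,
    show ∀ i : ℕ, j'' + 2 - 2 - i = j'' - i from fun i => by omega]
  have hsub : ∀ i ∈ Finset.range (j'' + 1),
      ((2 : ℚ) ^ (j'' + 1) - 2 ^ (j'' - i)) * (Tm m (i + 2) - Tm m (i + 1))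
      = ((2 : ℚ) ^ (j'' + 1) - 2 ^ (j'' - i)) * Tm m (i + 2)
        - ((2 : ℚ) ^ (j'' + 1) - 2 ^ (j'' - i)) * Tm m (i + 1) := by
    intro i _; ring
  rw [Finset.sum_congr rfl hsub, Finset.sum_sub_distrib]
  rw [Finset.sum_range_succ
    (fun i => ((2 : ℚ) ^ (j'' + 1) - 2 ^ (j'' - i)) * Tm m (i + 2)) j'']
  rw [Tm_zero m (j'' + 2) (by omega), mul_zero, add_zero]
  rw [Finset.sum_range_succ'
    (fun i => ((2 : ℚ) ^ (j'' + 1) - 2 ^ (j'' - i)) * Tm m (i + 1)) j'']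
  rw [Finset.sum_range_succ'
    (fun i => (2 : ℚ) ^ (j'' - i) * Tm m (i + 1)) j'']
  rw [Nat.sub_zero, Tm_one m hm]
  have hcomb : ∀ i ∈ Finset.range j'',
      ((2 : ℚ) ^ (j'' + 1) - 2 ^ (j'' - i)) * Tm m (i + 2)
        - ((2 : ℚ) ^ (j'' + 1) - 2 ^ (j'' - (i + 1))) * Tm m (i + 1 + 1)
      = -((2 : ℚ) ^ (j'' - (i + 1)) * Tm m (i + 1 + 1)) := by
    intro i hi
    simp only [Finset.mem_range] at hi
    rw [show i + 1 + 1 = i + 2 by omega,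
      show j'' - i = (j'' - (i + 1)) + 1 by omega, pow_succ]
    ring
  have h5 : (∑ i ∈ Finset.range j'',
        ((2 : ℚ) ^ (j'' + 1) - 2 ^ (j'' - i)) * Tm m (i + 2))
      - (∑ i ∈ Finset.range j'',
        ((2 : ℚ) ^ (j'' + 1) - 2 ^ (j'' - (i + 1))) * Tm m (i + 1 + 1))
      = -∑ i ∈ Finset.range j'', (2 : ℚ) ^ (j'' - (i + 1)) * Tm m (i + 1 + 1) := by
    rw [← Finset.sum_sub_distrib, ← Finset.sum_neg_distrib]
    exact Finset.sum_congr rfl hcomb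
  linear_combination h5

theorem chi_eq_sigma (l j : ℕ) (hl : 2 ≤ l) (hj : l ≤ j) :
    chiCoeff l j = sigmaCoeff l j := by
  obtain ⟨m, rfl⟩ : ∃ m, l = m + 1 := ⟨l - 1, by omega⟩
  have hm : 1 ≤ m := by omega
  have hj2 : 2 ≤ j := by omega
  -- sigma in terms of Lm
  have hsig : sigmaCoeff (m + 1) j = (-1 : ℚ) ^ (j - 1) * Lm m j := by
    unfold sigmaCoeff Lm fN
    simp only [Nat.add_sub_cancel]
  -- chi in terms of Rm
  have hchi : chiCoeff (m + 1) j = (-1 : ℚ) ^ (j - (m + 1)) * (-Rm m j) := by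
    unfold chiCoeff
    congr 1
    rw [show Finset.Icc 1 (j - 1) = Finset.Ico 1 j by
      rw [← Finset.Ico_add_one_right_eq_Icc]; congr 1; omega]
    rw [Finset.sum_Ico_eq_sum_range]
    rw [← abel_step m j hm (by omega) hj2]
    apply Finset.sum_congr rfl
    intro i hi
    simp only [Finset.mem_range] at hi
    rw [chi_inner m (1 + i)]
    rw [show 1 + i + 1 = (i + 1) + 1 by omega]
    rw [Tm_rec m (i + 1)]
    rw [show (i + 1) + 1 = i + 2 by omega]
    rw [show j - 1 - (1 + i) = j - 2 - i by omega]
    have hc : ((1 + i : ℕ) : ℚ) + 1 ≠ 0 := by positivity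
    field_simp
    ring
  rw [hchi, hsig, Lm_eq m hm j (by omega)]
  rw [neg_one_pow_nat_sub j (m + 1) hj, neg_one_pow_nat_sub j 1 (by omega)]
  ring
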